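/- arXiv:1412.3855 — 3 statements merged into one kernel-verified Lean document; each statement's English description precedes it below -/
import Mathlib

section
/- Let G be a finite simple graph on vertex set V with at least one edge, and let W be any real symmetric V×V matrix with zero diagonal, not identically zero, satisfying W_{uv} = 0 whenever u and v are not adjacent in G (negative entries are allowed). Let λ_max(W) and λ_min(W) denote the largest and smallest eigenvalues of W. Then the chromatic number of G satisfies χ(G) ≥ 1 − λ_max(W)/λ_min(W). -/
open Matrix Finset
open scoped RealInnerProductSpace

section Aux

variable {V : Type*} [Fintype V] [DecidableEq V]

private lemma euclid_inner_eq (x y : EuclideanSpace ℝ V) :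
    ⟪x, y⟫ = (⇑x : V → ℝ) ⬝ᵥ ⇑y := by
  simp [PiLp.inner_apply, dotProduct, RCLike.inner_apply, mul_comm]

/-- symmetry of the bilinear form -/
private lemma dot_mulVec_symm (W : Matrix V V ℝ) (hW : W.IsHermitian)
    (y z : V → ℝ) : y ⬝ᵥ (W *ᵥ z) = (W *ᵥ y) ⬝ᵥ z := by
  rw [Matrix.dotProduct_mulVec, ← Matrix.mulVec_transpose]
  congr 1
  rw [← Matrix.conjTranspose_eq_transpose_of_trivial, hW]

/-- spectral expansion of the quadratic form -/
private lemma quad_eq (W : Matrix V V ℝ) (hW : W.IsHermitian) (y : V → ℝ) :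
    y ⬝ᵥ (W *ᵥ y) =
      ∑ i, hW.eigenvalues i * ((⇑(hW.eigenvectorBasis i) : V → ℝ) ⬝ᵥ y) ^ 2 := by
  classical
  set b := hW.eigenvectorBasis
  have h1 : ∀ i : V, (⇑(b i) : V → ℝ) ⬝ᵥ (W *ᵥ y)
      = hW.eigenvalues i * ((⇑(b i) : V → ℝ) ⬝ᵥ y) := by
    intro i
    rw [dot_mulVec_symm W hW, hW.mulVec_eigenvectorBasis i, smul_dotProduct]
    rfl
  have h2 := b.sum_inner_mul_inner ((WithLp.equiv 2 (V → ℝ)).symm y)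
      ((WithLp.equiv 2 (V → ℝ)).symm (W *ᵥ y))
  simp only [euclid_inner_eq] at h2
  have hy : (⇑((WithLp.equiv 2 (V → ℝ)).symm y) : V → ℝ) = y := rfl
  have hz : (⇑((WithLp.equiv 2 (V → ℝ)).symm (W *ᵥ y)) : V → ℝ) = W *ᵥ y := rfl
  rw [hy, hz] at h2
  rw [← h2]
  refine Finset.sum_congr rfl fun i _ => ?_
  rw [h1 i, dotProduct_comm y (⇑(b i))]
  ring

/-- Parseval for the dot product -/
private lemma norm_eq (W : Matrix V V ℝ) (hW : W.IsHermitian) (y : V → ℝ) :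
    y ⬝ᵥ y = ∑ i, ((⇑(hW.eigenvectorBasis i) : V → ℝ) ⬝ᵥ y) ^ 2 := by
  classical
  set b := hW.eigenvectorBasis
  have h2 := b.sum_inner_mul_inner ((WithLp.equiv 2 (V → ℝ)).symm y)
      ((WithLp.equiv 2 (V → ℝ)).symm y)
  simp only [euclid_inner_eq] at h2
  have hy : (⇑((WithLp.equiv 2 (V → ℝ)).symm y) : V → ℝ) = y := rfl
  rw [hy] at h2
  rw [← h2]
  refine Finset.sum_congr rfl fun i _ => ?_
  rw [dotProduct_comm y (⇑(b i))]
  ring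

private lemma rayleigh_lower (W : Matrix V V ℝ) (hW : W.IsHermitian) [Nonempty V]
    (y : V → ℝ) : (⨅ i, hW.eigenvalues i) * (y ⬝ᵥ y) ≤ y ⬝ᵥ (W *ᵥ y) := by
  rw [quad_eq W hW y, norm_eq W hW y, Finset.mul_sum]
  refine Finset.sum_le_sum fun i _ => ?_
  exact mul_le_mul_of_nonneg_right (ciInf_le (Set.Finite.bddBelow (Set.finite_range _)) i)
    (sq_nonneg _)

end Aux

/-- **Hoffman–Lovász theorem.** For a finite simple graph `G` with at least one edge and any
weighted adjacency matrix `W` of `G` (real symmetric, zero diagonal, nonzero, supported on the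
edges of `G`, negative entries allowed), the chromatic number of `G` satisfies
`χ(G) ≥ 1 - λ_max(W) / λ_min(W)`.  (Stated via: every proper `k`-coloring forces
`k ≥ 1 - λ_max(W) / λ_min(W)`.) -/
theorem hoffman_lovasz {V : Type*} [Fintype V] [DecidableEq V] (G : SimpleGraph V)
    (hedge : ∃ u v, G.Adj u v)
    (W : Matrix V V ℝ) (hW : W.IsHermitian)
    (hdiag : ∀ v, W v v = 0) (hW0 : W ≠ 0)
    (hsupp : ∀ u v, ¬ G.Adj u v → W u v = 0) :
    ∀ k : ℕ, G.Colorable k →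
      1 - (⨆ v, hW.eigenvalues v) / (⨅ v, hW.eigenvalues v) ≤ (k : ℝ) := by
  classical
  obtain ⟨u0, v0, huv0⟩ := hedge
  have : Nonempty V := ⟨u0⟩
  intro k hk
  obtain ⟨C⟩ := hk
  set L : ℝ := ⨅ i, hW.eigenvalues i with hLdef
  set M : ℝ := ⨆ i, hW.eigenvalues i with hMdef
  have hk1 : 1 ≤ k := by
    rcases Nat.eq_zero_or_pos k with h | h
    · subst h; exact (C u0).elim0
    · exact h
  -- expansion of the quadratic form
  have expand : ∀ y z : V → ℝ, y ⬝ᵥ (W *ᵥ z) = ∑ u, ∑ v, y u * (W u v * z v) := by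
    intro y z
    simp [dotProduct, Matrix.mulVec, Finset.mul_sum]
  -- L is negative
  have hLneg : L < 0 := by
    obtain ⟨a, b, hab⟩ : ∃ a b, W a b ≠ 0 := by
      by_contra h
      push_neg at h
      exact hW0 (by ext a b; simp [h a b])
    have hWba : W b a = W a b := by
      have h := congrFun (congrFun hW b) a
      simp only [Matrix.conjTranspose_apply, RCLike.star_def, starRingEnd_apply, star_trivial] at h
      exact h.symm
    have hne : a ≠ b := fun h => hab (h ▸ hdiag a)
    set y : V → ℝ := Pi.single a (W a b) + Pi.single b (-1) with hy
    have hq : y ⬝ᵥ (W *ᵥ y) = -2 * (W a b) ^ 2 := by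
      rw [expand, hy]
      have : ∀ u v : V,
          (Pi.single a (W a b) + Pi.single b (-1) : V → ℝ) u *
            (W u v * (Pi.single a (W a b) + Pi.single b (-1) : V → ℝ) v)
          = ((if u = a then W a b else 0) + (if u = b then -1 else 0)) *
            (W u v * ((if v = a then W a b else 0) + (if v = b then -1 else 0))) := by
        intro u v
        simp [Pi.single_apply]
      simp only [this]
      rw [Finset.sum_eq_add_of_mem a b (Finset.mem_univ a) (Finset.mem_univ b) hne ?_]
      · simp only [if_pos rfl, if_neg hne, if_neg (Ne.symm hne), if_true, eq_self_iff_true]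
        rw [Finset.sum_eq_add_of_mem a b (Finset.mem_univ a) (Finset.mem_univ b) hne ?_,
            Finset.sum_eq_add_of_mem a b (Finset.mem_univ a) (Finset.mem_univ b) hne ?_]
        · simp only [if_pos rfl, if_neg hne, if_neg (Ne.symm hne), if_true, eq_self_iff_true]
          rw [hdiag a, hdiag b, hWba]
          ring
        · intro c _ hc
          simp [if_neg hc.1, if_neg hc.2]
        · intro c _ hc
          simp [if_neg hc.1, if_neg hc.2]
      · intro c _ hc
        simp [if_neg hc.1, if_neg hc.2]
    have hn : y ⬝ᵥ y = (W a b) ^ 2 + 1 := by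
      rw [hy]
      simp only [dotProduct, Pi.add_apply, Pi.single_apply]
      rw [Finset.sum_eq_add_of_mem a b (Finset.mem_univ a) (Finset.mem_univ b) hne ?_]
      · simp only [if_pos rfl, if_neg hne, if_neg (Ne.symm hne), if_true, eq_self_iff_true]
        ring
      · intro c _ hc
        simp [if_neg hc.1, if_neg hc.2]
    have hray := rayleigh_lower W hW y
    rw [hq, hn] at hray
    have hsq : 0 < (W a b) ^ 2 := by positivity
    nlinarith [hsq]
  -- top eigenvector
  obtain ⟨i0, hi0⟩ : ∃ i0, ∀ i, hW.eigenvalues i ≤ hW.eigenvalues i0 :=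
    Finite.exists_max _
  have hMi0 : hW.eigenvalues i0 = M := by
    refine le_antisymm (le_ciSup (Set.Finite.bddAbove (Set.finite_range _)) i0) ?_
    exact ciSup_le hi0
  set x : V → ℝ := ⇑(hW.eigenvectorBasis i0) with hxdef
  have hWx : W *ᵥ x = M • x := by
    rw [hxdef, hW.mulVec_eigenvectorBasis i0, hMi0]
  have hxx : x ⬝ᵥ x = 1 := by
    have hn1 := (hW.eigenvectorBasis.orthonormal).1 i0
    have h1 : ⟪hW.eigenvectorBasis i0, hW.eigenvectorBasis i0⟫ = 1 := by
      rw [real_inner_self_eq_norm_sq, hn1]; norm_num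
    rw [euclid_inner_eq] at h1
    exact h1
  -- color classes
  set xc : Fin k → V → ℝ := fun j v => if C v = j then x v else 0 with hxc
  have hsumxc : ∑ j, xc j = x := by
    funext v
    simp only [Finset.sum_apply, hxc]
    rw [Finset.sum_ite_eq]
    simp
  have hdotc : ∀ j, xc j ⬝ᵥ x = xc j ⬝ᵥ xc j := by
    intro j
    refine Finset.sum_congr rfl fun v _ => ?_
    by_cases h : C v = j <;> simp [hxc, h]
  have hzero : ∀ j, xc j ⬝ᵥ (W *ᵥ xc j) = 0 := by
    intro j
    rw [expand]
    refine Finset.sum_eq_zero fun u _ => Finset.sum_eq_zero fun v _ => ?_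
    by_cases hu : C u = j
    · by_cases hv : C v = j
      · rcases eq_or_ne u v with h | h
        · subst h; rw [hdiag u]; ring
        · have hnadj : ¬ G.Adj u v := fun hadj => C.valid hadj (hu.trans hv.symm)
          rw [hsupp u v hnadj]; ring
      · simp [hxc, if_neg hv]
    · simp [hxc, if_neg hu]
  set t : Fin k → ℝ := fun j => xc j ⬝ᵥ xc j with ht
  have htsum : ∑ j, t j = 1 := by
    calc ∑ j, t j = ∑ j, ∑ v, xc j v * x v :=
          Finset.sum_congr rfl fun j _ => (hdotc j).symm
      _ = ∑ v, ∑ j : Fin k, xc j v * x v := Finset.sum_comm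
      _ = ∑ v, x v * x v := by
          refine Finset.sum_congr rfl fun v _ => ?_
          rw [← Finset.sum_mul]
          congr 1
          simpa using congrFun hsumxc v
      _ = 1 := hxx
  -- the key per-class inequality
  have hkey : ∀ j, L * (1 + ((k:ℝ)^2 - 2*k) * t j) ≤ M * (1 - 2*(k:ℝ) * t j) := by
    intro j
    set w : V → ℝ := x - (k:ℝ) • xc j with hw
    have e3 : x ⬝ᵥ (W *ᵥ xc j) = M * (xc j ⬝ᵥ xc j) := by
      rw [dot_mulVec_symm W hW, hWx, smul_dotProduct,
        dotProduct_comm, hdotc j, smul_eq_mul]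
    have hxj : x ⬝ᵥ xc j = xc j ⬝ᵥ xc j := by
      rw [dotProduct_comm]; exact hdotc j
    have hq : w ⬝ᵥ (W *ᵥ w) = M * (1 - 2*(k:ℝ) * t j) := by
      rw [hw, Matrix.mulVec_sub, Matrix.mulVec_smul, hWx]
      simp only [sub_dotProduct, dotProduct_sub, smul_dotProduct,
        dotProduct_smul, smul_eq_mul, hxx, hzero j, e3, hdotc j, ht]
      ring
    have hn : w ⬝ᵥ w = 1 + ((k:ℝ)^2 - 2*k) * t j := by
      rw [hw]
      simp only [sub_dotProduct, dotProduct_sub, smul_dotProduct,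
        dotProduct_smul, smul_eq_mul, hxx, hxj, hdotc j, ht]
      ring
    have := rayleigh_lower W hW w
    rw [hq, hn] at this
    exact this
  -- sum over classes
  have hsum : L * ((k:ℝ)^2 - k) ≤ -(k:ℝ) * M := by
    have h1 : ∑ j : Fin k, L * (1 + ((k:ℝ)^2 - 2*k) * t j)
        ≤ ∑ j : Fin k, M * (1 - 2*(k:ℝ) * t j) :=
      Finset.sum_le_sum fun j _ => hkey j
    have hgen : ∀ a c : ℝ, ∑ j : Fin k, (a + c * t j) = a * k + c := by
      intro a c
      rw [Finset.sum_add_distrib, ← Finset.mul_sum, htsum, mul_one, Finset.sum_const,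
        Finset.card_univ, Fintype.card_fin, nsmul_eq_mul]
      ring
    have e1 : ∑ j : Fin k, L * (1 + ((k:ℝ)^2 - 2*k) * t j)
        = L * k + L * ((k:ℝ)^2 - 2*k) := by
      rw [← hgen L (L * ((k:ℝ)^2 - 2*k))]
      exact Finset.sum_congr rfl fun j _ => by ring
    have e2 : ∑ j : Fin k, M * (1 - 2*(k:ℝ) * t j)
        = M * k + M * (-(2*(k:ℝ))) := by
      rw [← hgen M (M * (-(2*(k:ℝ))))]
      exact Finset.sum_congr rfl fun j _ => by ring
    rw [e1, e2] at h1
    nlinarith [h1]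
  -- conclude
  have hkpos : (0:ℝ) < k := by exact_mod_cast hk1
  have hM_le : M ≤ ((k:ℝ) - 1) * (-L) := by nlinarith [hsum, hkpos]
  have hLpos : (0:ℝ) < -L := by linarith
  have : M / (-L) ≤ (k:ℝ) - 1 := (div_le_iff₀ hLpos).mpr hM_le
  have hML : M / L = -(M / (-L)) := by
    rw [div_neg, neg_neg]
  rw [hML]
  linarith
end

section
/- Let A be a V×V symmetric matrix with nonnegative integer entries and zero diagonal, not identically zero (the adjacency matrix of a multigraph G on n = |V| vertices), let |E| = (1/2)·Σ_{u,v} A_{uv} be the number of edges, let d̄ = 2|E|/n be the average degree, and let λ_min be the smallest eigenvalue of A. Suppose k ≥ 2 and there exists a (not necessarily proper) coloring g : V → {1,...,k} whose number of monochromatic edges, (1/2)·Σ_{u,v : g(u)=g(v)} A_{uv}, is at most p·|E| for some real p ≥ 0. Then p ≥ (d̄ + (k−1)·λ_min)/(d̄·k); equivalently, λ_min ≤ d̄(pk − 1)/(k − 1). -/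
open Matrix

lemma rayleigh_min {V : Type*} [Fintype V] [DecidableEq V] [Nonempty V]
    (A : Matrix V V ℝ) (hA : A.IsHermitian) (x : V → ℝ) :
    (⨅ i, hA.eigenvalues i) * (x ⬝ᵥ x) ≤ x ⬝ᵥ (A *ᵥ x) := by
  set U : Matrix V V ℝ := (Matrix.IsHermitian.eigenvectorUnitary hA : Matrix V V ℝ) with hU
  set y : V → ℝ := star U *ᵥ x with hy
  have hUU : U * star U = 1 :=
    (Matrix.mem_unitaryGroup_iff).mp (Matrix.IsHermitian.eigenvectorUnitary hA).2
  have hyv : y = x ᵥ* U := by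
    rw [hy, Matrix.star_eq_conjTranspose, Matrix.conjTranspose_eq_transpose_of_trivial,
      Matrix.mulVec_transpose]
  have hxy : y ⬝ᵥ y = x ⬝ᵥ x := by
    calc y ⬝ᵥ y = (x ᵥ* U) ⬝ᵥ y := by rw [← hyv]
    _ = x ⬝ᵥ (U *ᵥ y) := (Matrix.dotProduct_mulVec _ _ _).symm
    _ = x ⬝ᵥ ((U * star U) *ᵥ x) := by rw [hy, Matrix.mulVec_mulVec]
    _ = x ⬝ᵥ x := by rw [hUU, Matrix.one_mulVec]
  have hquad : x ⬝ᵥ (A *ᵥ x) = ∑ i, hA.eigenvalues i * (y i * y i) := by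
    conv_lhs => rw [hA.spectral_theorem, Unitary.conjStarAlgAut_apply]
    rw [← Matrix.mulVec_mulVec, ← Matrix.mulVec_mulVec, Matrix.dotProduct_mulVec, ← hyv, ← hy]
    simp only [dotProduct, Matrix.mulVec_diagonal, Function.comp_apply, RCLike.ofReal_real_eq_id, id_eq]
    exact Finset.sum_congr rfl fun i _ => by ring
  have hinf : ∀ i, (⨅ j, hA.eigenvalues j) ≤ hA.eigenvalues i := fun i =>
    ciInf_le (Set.Finite.bddBelow (Set.finite_range _)) i
  rw [← hxy, hquad, dotProduct, Finset.mul_sum]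
  exact Finset.sum_le_sum fun i _ =>
    mul_le_mul_of_nonneg_right (hinf i) (mul_self_nonneg _)



/-- **Lemma on colorings with few conflicts.** Let `A` be the adjacency matrix of a multigraph
(symmetric, nonnegative integer entries, zero diagonal, not identically zero) on the finite
vertex set `V`, with `|E| = (1/2)·Σ A_{uv}` edges, average degree `d̄ = 2|E|/n`, and smallest
eigenvalue `λ_min`.  If `k ≥ 2` and some (not necessarily proper) `k`-coloring has at most
`p·|E|` monochromatic edges (`p ≥ 0`), then `p ≥ (d̄ + (k-1)·λ_min)/(d̄·k)`; equivalently,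
`λ_min ≤ d̄·(pk - 1)/(k - 1)`. -/
theorem coloring_with_conflicts {V : Type*} [Fintype V] [DecidableEq V]
    (A : Matrix V V ℝ) (hA : A.IsHermitian)
    (hnat : ∀ u v, ∃ m : ℕ, A u v = (m : ℝ))
    (hdiag : ∀ v, A v v = 0) (hA0 : A ≠ 0)
    (k : ℕ) (hk : 2 ≤ k) (p : ℝ) (hp : 0 ≤ p) (g : V → Fin k)
    (hmono : (1 / 2) * (∑ u, ∑ v, if g u = g v then A u v else 0) ≤
      p * ((1 / 2) * ∑ u, ∑ v, A u v)) :
    ((2 * ((1 / 2) * ∑ u, ∑ v, A u v) / (Fintype.card V : ℝ)) +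
        ((k : ℝ) - 1) * (⨅ v, hA.eigenvalues v)) /
      ((2 * ((1 / 2) * ∑ u, ∑ v, A u v) / (Fintype.card V : ℝ)) * k) ≤ p ∧
    (⨅ v, hA.eigenvalues v) ≤
      (2 * ((1 / 2) * ∑ u, ∑ v, A u v) / (Fintype.card V : ℝ)) * (p * k - 1) / ((k : ℝ) - 1) := by
  have hAnn : ∀ u v, 0 ≤ A u v := fun u v => by
    obtain ⟨m, hm⟩ := hnat u v; rw [hm]; positivity
  obtain ⟨u0, v0, huv⟩ : ∃ u v, A u v ≠ 0 := by
    by_contra h; push_neg at h; exact hA0 (Matrix.ext fun u v => h u v)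
  haveI : Nonempty V := ⟨u0⟩
  set S := ∑ u, ∑ v, A u v with hSdef
  set M := ∑ u, ∑ v, if g u = g v then A u v else 0 with hMdef
  set lam := ⨅ v, hA.eigenvalues v with hlam
  have hS_pos : 0 < S := by
    have h1 : 0 < ∑ v, A u0 v :=
      Finset.sum_pos' (fun v _ => hAnn u0 v)
        ⟨v0, Finset.mem_univ v0, lt_of_le_of_ne (hAnn u0 v0) (Ne.symm huv)⟩
    exact Finset.sum_pos' (fun u _ => Finset.sum_nonneg fun v _ => hAnn u v)
      ⟨u0, Finset.mem_univ u0, h1⟩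
  have hn : (0:ℝ) < (Fintype.card V : ℝ) := by exact_mod_cast Fintype.card_pos
  have hkpos : (0:ℝ) < (k:ℝ) := by positivity
  have hk0 : (k:ℝ) ≠ 0 := ne_of_gt hkpos
  have hk1 : (0:ℝ) < (k:ℝ) - 1 := by
    have : (2:ℝ) ≤ (k:ℝ) := by exact_mod_cast hk
    linarith
  have hMS : M ≤ p * S := by linarith
  set x : Fin k → V → ℝ := fun i v => (if g v = i then 1 else 0) - 1/k with hx
  have hsum : ∀ u v : V, ∑ i : Fin k, x i u * x i v
      = (if g u = g v then 1 else 0) - 1/k := by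
    intro u v
    have e1 : ∑ i : Fin k, (if g u = i then (1:ℝ) else 0) = 1 := by simp
    have e2 : ∑ i : Fin k, (if g v = i then (1:ℝ) else 0) = 1 := by simp
    have e3 : ∑ i : Fin k, (if g u = i then (1:ℝ) else 0) * (if g v = i then 1 else 0)
        = if g u = g v then 1 else 0 := by
      simp only [ite_mul, one_mul, zero_mul, Finset.sum_ite_eq, Finset.mem_univ, if_true]
      rcases eq_or_ne (g u) (g v) with h | h
      · simp [h]
      · simp [h, Ne.symm h]
    calc ∑ i : Fin k, x i u * x i v
        = ∑ i : Fin k, ((if g u = i then (1:ℝ) else 0) * (if g v = i then 1 else 0)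
            - (if g u = i then (1:ℝ) else 0) * (1/k)
            - (1/k) * (if g v = i then (1:ℝ) else 0) + (1/k) * (1/k)) := by
          refine Finset.sum_congr rfl fun i _ => ?_
          simp only [hx]; ring
      _ = (if g u = g v then 1 else 0) - 1/k := by
          rw [Finset.sum_add_distrib, Finset.sum_sub_distrib, Finset.sum_sub_distrib,
            e3, ← Finset.sum_mul, e1, ← Finset.mul_sum, e2, Finset.sum_const,
            Finset.card_univ, Fintype.card_fin, nsmul_eq_mul]
          field_simp
          ring
  have key : ∀ u v : V, ∑ i : Fin k, x i u * (A u v * x i v)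
      = (if g u = g v then A u v else 0) - (1/k) * A u v := by
    intro u v
    have : ∑ i : Fin k, x i u * (A u v * x i v) = A u v * ∑ i : Fin k, x i u * x i v := by
      rw [Finset.mul_sum]; exact Finset.sum_congr rfl fun i _ => by ring
    rw [this, hsum u v]
    split_ifs <;> ring
  have hQA : ∑ i : Fin k, (x i) ⬝ᵥ (A *ᵥ x i) = M - (1/k) * S := by
    have step : ∀ i : Fin k, (x i) ⬝ᵥ (A *ᵥ x i) = ∑ u, ∑ v, x i u * (A u v * x i v) := by
      intro i
      simp only [dotProduct, Matrix.mulVec, dotProduct, Finset.mul_sum]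
    rw [Finset.sum_congr rfl fun i _ => step i]
    rw [Finset.sum_comm]
    have : ∀ u : V, ∑ i : Fin k, ∑ v, x i u * (A u v * x i v)
        = ∑ v, ((if g u = g v then A u v else 0) - (1/k) * A u v) := by
      intro u
      rw [Finset.sum_comm]
      exact Finset.sum_congr rfl fun v _ => key u v
    rw [Finset.sum_congr rfl fun u _ => this u]
    simp only [Finset.sum_sub_distrib, hMdef, hSdef, ← Finset.mul_sum]
  have hNB : ∑ i : Fin k, (x i) ⬝ᵥ (x i) = (Fintype.card V : ℝ) * (1 - 1/k) := by
    simp only [dotProduct]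
    rw [Finset.sum_comm]
    have : ∀ v : V, ∑ i : Fin k, x i v * x i v = 1 - 1/k := by
      intro v
      rw [hsum v v, if_pos rfl]
    rw [Finset.sum_congr rfl fun v _ => this v, Finset.sum_const, Finset.card_univ,
      nsmul_eq_mul]
  have hR : lam * ((Fintype.card V : ℝ) * (1 - 1/k)) ≤ M - (1/k) * S := by
    calc lam * ((Fintype.card V : ℝ) * (1 - 1/k))
        = ∑ i : Fin k, lam * ((x i) ⬝ᵥ (x i)) := by rw [← Finset.mul_sum, hNB]
      _ ≤ ∑ i : Fin k, (x i) ⬝ᵥ (A *ᵥ x i) :=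
          Finset.sum_le_sum fun i _ => rayleigh_min A hA (x i)
      _ = M - (1/k) * S := hQA
  have h1 : lam * ((Fintype.card V : ℝ) * ((k:ℝ) - 1)) ≤ S * (p * k - 1) := by
    have h2 : lam * ((Fintype.card V : ℝ) * (1 - 1/k)) ≤ p * S - (1/k) * S := by linarith
    have h3 := mul_le_mul_of_nonneg_right h2 (le_of_lt hkpos)
    calc lam * ((Fintype.card V : ℝ) * ((k:ℝ) - 1))
        = (lam * ((Fintype.card V : ℝ) * (1 - 1/k))) * k := by field_simp; try ring
      _ ≤ (p * S - (1/k) * S) * k := h3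
      _ = S * (p * k - 1) := by field_simp; try ring
  have hkey2 : ((k:ℝ) - 1) * lam ≤ S / (Fintype.card V : ℝ) * (p * k - 1) := by
    rw [div_mul_eq_mul_div, le_div_iff₀ hn]
    calc ((k:ℝ) - 1) * lam * (Fintype.card V : ℝ)
        = lam * ((Fintype.card V : ℝ) * ((k:ℝ) - 1)) := by ring
      _ ≤ S * (p * k - 1) := h1
  have hd : 2 * ((1/2) * S) = S := by ring
  rw [hd]
  set d := S / (Fintype.card V : ℝ) with hddef
  have hdpos : 0 < d := div_pos hS_pos hn
  constructor
  · rw [div_le_iff₀ (mul_pos hdpos hkpos)]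
    have : d * (p * k - 1) = p * (d * k) - d := by ring
    linarith
  · rw [le_div_iff₀ hk1]
    calc lam * ((k:ℝ) - 1) = ((k:ℝ) - 1) * lam := by ring
      _ ≤ d * (p * k - 1) := hkey2
end

section
/- Let H be a 3-uniform hypergraph on a finite nonempty vertex set V with n = |V| vertices, given by a finite family (e_i)_{i∈I} of 3-element subsets of V (repeats allowed). If H is 2-colorable, then its average degree d̄ = 3|I|/n satisfies d̄ ≤ −(3/2)·λ_min, where λ_min is the smallest eigenvalue of the underlying graph adjacency matrix of H. -/
open Finset

/-- The underlying graph adjacency matrix of a hypergraph given by the family of hyperedges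
`e : I → Finset V`: the entry at `(u, v)` with `u ≠ v` is the number of hyperedges containing
both `u` and `v`, and the diagonal is zero. -/
def underlyingAdj {V I : Type*} [Fintype I] [DecidableEq V] (e : I → Finset V) :
    Matrix V V ℝ := fun u v =>
  if u = v then 0 else ((Finset.univ.filter fun i => u ∈ e i ∧ v ∈ e i).card : ℝ)

lemma underlyingAdj_isHermitian {V I : Type*} [Fintype I] [DecidableEq V] (e : I → Finset V) :
    (underlyingAdj e).IsHermitian := by
  rw [Matrix.IsHermitian, Matrix.conjTranspose_eq_transpose_of_trivial]
  apply Matrix.IsSymm.ext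
  intro i j
  simp only [underlyingAdj, eq_comm (a := j) (b := i)]
  rcases eq_or_ne i j with h | h
  · simp [h]
  · simp only [if_neg h, if_neg h]
    congr 2
    apply Finset.filter_congr
    intro x _
    simp [and_comm]

-- Rayleigh: lambda_min * ‖y‖² ≤ yᵀ A y
lemma rayleigh_low {V : Type*} [Fintype V] [Nonempty V] [DecidableEq V]
    {A : Matrix V V ℝ} (hA : A.IsHermitian) (y : V → ℝ) :
    (⨅ v, hA.eigenvalues v) * (dotProduct y y) ≤ dotProduct y (Matrix.mulVec A y) := by
  set c := ⨅ v, hA.eigenvalues v with hc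
  have hcle : ∀ v, c ≤ hA.eigenvalues v := fun v =>
    ciInf_le (Set.Finite.bddBelow (Set.finite_range _)) v
  set U : Matrix V V ℝ := (hA.eigenvectorUnitary : Matrix V V ℝ) with hU
  have hUU : U * star U = 1 := (Matrix.mem_unitaryGroup_iff).mp hA.eigenvectorUnitary.2
  have hpsd : (U * Matrix.diagonal (fun v => hA.eigenvalues v - c) * U.conjTranspose).PosSemidef :=
    (Matrix.posSemidef_diagonal_iff.mpr fun v => sub_nonneg.mpr (hcle v)).mul_mul_conjTranspose_same U
  have hstar : U.conjTranspose = star U := rfl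
  rw [hstar] at hpsd
  have key : U * Matrix.diagonal (fun v => hA.eigenvalues v - c) * star U = A - c • 1 := by
    have hd : Matrix.diagonal (fun v => hA.eigenvalues v - c)
        = Matrix.diagonal (RCLike.ofReal ∘ hA.eigenvalues) - c • 1 := by
      rw [Matrix.smul_one_eq_diagonal c, ← Matrix.diagonal_sub]
      rfl
    have hs := hA.spectral_theorem
    rw [Unitary.conjStarAlgAut_apply] at hs
    rw [hd, Matrix.mul_sub, Matrix.sub_mul, ← hs]
    congr 1
    rw [Matrix.mul_smul, Matrix.smul_mul, Matrix.mul_one, hUU]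
  rw [key] at hpsd
  have h0 := hpsd.dotProduct_mulVec_nonneg y
  have : dotProduct (star y) (Matrix.mulVec (A - c • 1) y)
      = dotProduct y (Matrix.mulVec A y) - c * dotProduct y y := by
    rw [Matrix.sub_mulVec, dotProduct_sub]
    simp [Matrix.smul_mulVec, Matrix.one_mulVec, dotProduct_smul, smul_eq_mul,
      star_trivial]
  rw [this] at h0
  linarith

lemma edge_sum {V : Type*} [DecidableEq V] (s : Finset V) (hs : s.card = 3)
    (x : V → ℝ) (hx : ∀ v, x v = 1 ∨ x v = -1)
    (hne : ∃ u ∈ s, ∃ v ∈ s, x u ≠ x v) :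
    ∑ u ∈ s, ∑ v ∈ s, (if u = v then 0 else x u * x v) = -2 := by
  obtain ⟨a, b, c, hab, hac, hbc, rfl⟩ := Finset.card_eq_three.mp hs
  have hnc : ¬ (x a = x b ∧ x a = x c) := by
    rintro ⟨h1, h2⟩
    obtain ⟨u, hu, v, hv, huv⟩ := hne
    have hall : ∀ w ∈ ({a, b, c} : Finset V), x w = x a := by
      intro w hw
      simp only [Finset.mem_insert, Finset.mem_singleton] at hw
      rcases hw with rfl | rfl | rfl <;> simp [h1.symm, h2.symm]
    exact huv ((hall u hu).trans (hall v hv).symm)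
  have hba : b ≠ a := hab.symm
  have hca : c ≠ a := hac.symm
  have hcb : c ≠ b := hbc.symm
  have h1 : a ∉ ({b, c} : Finset V) := by simp [hab, hac]
  have h2 : b ∉ ({c} : Finset V) := by simp [hbc]
  simp only [Finset.sum_insert h1, Finset.sum_insert h2, Finset.sum_singleton]
  simp only [if_pos rfl, if_neg hab, if_neg hac, if_neg hba, if_neg hbc, if_neg hca, if_neg hcb]
  rcases hx a with ha | ha <;> rcases hx b with hb | hb <;> rcases hx c with hc | hc <;>
    simp_all <;> norm_num

lemma dot_adj {V I : Type*} [Fintype V] [DecidableEq V] [Fintype I] (e : I → Finset V)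
    (x : V → ℝ) (hterm : ∀ i, ∑ u ∈ e i, ∑ v ∈ e i, (if u = v then 0 else x u * x v) = -2) :
    dotProduct x (Matrix.mulVec (underlyingAdj e) x) = -2 * Fintype.card I := by
  have hcard : ∀ u v : V, ((Finset.univ.filter fun i => u ∈ e i ∧ v ∈ e i).card : ℝ)
      = ∑ i : I, if u ∈ e i ∧ v ∈ e i then (1 : ℝ) else 0 := by
    intro u v
    rw [Finset.card_filter]
    push_cast
    rfl
  have hpt : ∀ u v : V, x u * (underlyingAdj e u v * x v)
      = ∑ i : I, if u ∈ e i ∧ v ∈ e i then (if u = v then 0 else x u * x v) else 0 := by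
    intro u v
    unfold underlyingAdj
    by_cases h : u = v
    · simp [h]
    · rw [if_neg h, hcard u v, Finset.sum_mul, Finset.mul_sum]
      refine Finset.sum_congr rfl fun i _ => ?_
      split_ifs <;> ring
  have hswap : ∀ i : I, ∑ u : V, ∑ v : V,
      (if u ∈ e i ∧ v ∈ e i then (if u = v then 0 else x u * x v) else 0) = -2 := by
    intro i
    rw [← hterm i]
    have hin : ∀ u : V, ∑ v : V, (if u ∈ e i ∧ v ∈ e i then (if u = v then 0 else x u * x v) else 0)
        = if u ∈ e i then ∑ v ∈ e i, (if u = v then 0 else x u * x v) else 0 := by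
      intro u
      by_cases hu : u ∈ e i
      · simp only [hu, true_and, if_pos hu]
        rw [Finset.sum_ite_mem, Finset.univ_inter]
        simp
      · simp [hu]
    simp only [hin]
    rw [Finset.sum_ite_mem, Finset.univ_inter]
  calc dotProduct x (Matrix.mulVec (underlyingAdj e) x)
      = ∑ u : V, ∑ v : V, x u * (underlyingAdj e u v * x v) := by
        unfold dotProduct Matrix.mulVec
        exact Finset.sum_congr rfl fun u _ => Finset.mul_sum _ _ _
    _ = ∑ u : V, ∑ v : V, ∑ i : I,
        (if u ∈ e i ∧ v ∈ e i then (if u = v then 0 else x u * x v) else 0) := by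
        simp only [hpt]
    _ = ∑ i : I, ∑ u : V, ∑ v : V,
        (if u ∈ e i ∧ v ∈ e i then (if u = v then 0 else x u * x v) else 0) := by
        have h3 : ∀ f : V → V → I → ℝ, ∑ u : V, ∑ v : V, ∑ i : I, f u v i
            = ∑ i : I, ∑ u : V, ∑ v : V, f u v i := fun f =>
          (Finset.sum_congr rfl fun u _ => Finset.sum_comm).trans Finset.sum_comm
        exact h3 fun u v i => if u ∈ e i ∧ v ∈ e i then (if u = v then 0 else x u * x v) else 0
    _ = ∑ _i : I, (-2 : ℝ) := Finset.sum_congr rfl fun i _ => hswap i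
    _ = -2 * Fintype.card I := by
        rw [Finset.sum_const, Finset.card_univ, nsmul_eq_mul]
        ring

/-- If a 3-uniform hypergraph `H` on a nonempty finite vertex set, given by a family
`(e i)_{i : I}` of 3-element subsets, is 2-colorable, then its average degree
`d̄ = 3|I|/n` satisfies `d̄ ≤ -(3/2)·λ_min`, where `λ_min` is the smallest eigenvalue of the
underlying graph adjacency matrix of `H`. -/
theorem threeUniform_two_colorable {V I : Type*} [Fintype V] [Nonempty V] [DecidableEq V]
    [Fintype I] (e : I → Finset V) (he : ∀ i, (e i).card = 3)
    (hcol : ∃ g : V → Bool, ∀ i, ∃ u ∈ e i, ∃ v ∈ e i, g u ≠ g v) :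
    (3 * Fintype.card I : ℝ) / (Fintype.card V : ℝ) ≤
      -(3 / 2) * ⨅ v, (underlyingAdj_isHermitian e).eigenvalues v := by
  obtain ⟨g, hg⟩ := hcol
  set x : V → ℝ := fun v => if g v then 1 else -1 with hxdef
  have hx : ∀ v, x v = 1 ∨ x v = -1 := fun v => by
    by_cases h : g v <;> simp [hxdef, h]
  have hterm : ∀ i, ∑ u ∈ e i, ∑ v ∈ e i, (if u = v then 0 else x u * x v) = -2 := by
    intro i
    apply edge_sum (e i) (he i) x hx
    obtain ⟨u, hu, v, hv, huv⟩ := hg i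
    refine ⟨u, hu, v, hv, ?_⟩
    cases hgu : g u <;> cases hgv : g v <;> simp only [hxdef, hgu, hgv] <;> simp_all <;> norm_num
  have hdot := dot_adj e x hterm
  have hray := rayleigh_low (underlyingAdj_isHermitian e) x
  have hxx : dotProduct x x = Fintype.card V := by
    unfold dotProduct
    rw [show ∑ v : V, x v * x v = ∑ _v : V, (1 : ℝ) from
      Finset.sum_congr rfl fun v _ => by rcases hx v with h | h <;> rw [h] <;> norm_num]
    rw [Finset.sum_const, Finset.card_univ, nsmul_eq_mul, mul_one]
  rw [hdot, hxx] at hray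
  have hn : (0 : ℝ) < Fintype.card V := Nat.cast_pos.mpr Fintype.card_pos
  rw [div_le_iff₀ hn]
  nlinarith [hray]
end
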